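/- For an onto tops-only rule f on the universal domain, if f admits no worst-case obvious manipulation then it admits no best-case obvious manipulation; hence for tops-only rules a manipulation is obvious if and only if it is worst-case obvious. -/
import Mathlib


/-- A preference profile: each agent `i : Fin n` has a strict preference,
modeled as a linear order on the set of alternatives `X`. -/
abbrev Profile (n : ℕ) (X : Type*) := Fin n → LinearOrder X

/-- The top (best) alternative of a preference `L`. -/
noncomputable def top {X : Type*} [Fintype X] [Nonempty X] (L : LinearOrder X) : X :=
  @Finset.max' X L Finset.univ Finset.univ_nonempty

/-- `x` is strictly preferred to `y` according to `L`. -/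
def prefers {X : Type*} (L : LinearOrder X) (x y : X) : Prop := L.lt y x

/-- The option set left open by preference `L` of agent `i` at rule `f`. -/
def OptionSet {n : ℕ} {X : Type*} (f : Profile n X → X) (i : Fin n) (L : LinearOrder X) :
    Set X :=
  {x | ∃ P : Profile n X, P i = L ∧ f P = x}

/-- `Li'` is a profitable manipulation of `f` at (true preference) `Li` for agent `i`. -/
def IsManip {n : ℕ} {X : Type*} (f : Profile n X → X) (i : Fin n)
    (Li Li' : LinearOrder X) : Prop :=
  ∃ P : Profile n X, P i = Li ∧ prefers Li (f (Function.update P i Li')) (f P)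

/-- The worst element of `O(Li')` is strictly `Li`-preferred to the worst element of `O(Li)`.
For nonempty finite option sets this is equivalent to: some element of `O(Li)` is strictly
worse (w.r.t. `Li`) than every element of `O(Li')`. -/
def WorstImproves {n : ℕ} {X : Type*} (f : Profile n X → X) (i : Fin n)
    (Li Li' : LinearOrder X) : Prop :=
  ∃ w ∈ OptionSet f i Li, ∀ w' ∈ OptionSet f i Li', prefers Li w' w

/-- The best element of `O(Li')` is strictly `Li`-preferred to the best element of `O(Li)`.
For nonempty finite option sets this is equivalent to: some element of `O(Li')` is strictly
better (w.r.t. `Li`) than every element of `O(Li)`. -/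
def BestImproves {n : ℕ} {X : Type*} (f : Profile n X → X) (i : Fin n)
    (Li Li' : LinearOrder X) : Prop :=
  ∃ b' ∈ OptionSet f i Li', ∀ b ∈ OptionSet f i Li, prefers Li b' b

/-- `Li'` is an obvious manipulation of `f` at `Li` for agent `i`. -/
def IsObviousManip {n : ℕ} {X : Type*} (f : Profile n X → X) (i : Fin n)
    (Li Li' : LinearOrder X) : Prop :=
  IsManip f i Li Li' ∧ (WorstImproves f i Li Li' ∨ BestImproves f i Li Li')

/-- `f` is not obviously manipulable. -/
def NOM {n : ℕ} {X : Type*} (f : Profile n X → X) : Prop :=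
  ∀ (i : Fin n) (Li Li' : LinearOrder X), ¬ IsObviousManip f i Li Li'

/-- `f` is tops-only. -/
def TopsOnly {n : ℕ} {X : Type*} [Fintype X] [Nonempty X] (f : Profile n X → X) : Prop :=
  ∀ P P' : Profile n X, (∀ i, top (P i) = top (P' i)) → f P = f P'

/-- The set `V_i` of alternatives that agent `i` vetoes via some preference. -/
def VetoSet {n : ℕ} {X : Type*} (f : Profile n X → X) (i : Fin n) : Set X :=
  {x | ∃ L : LinearOrder X, x ∉ OptionSet f i L}

/-- The set `SV_i` of alternatives strongly vetoed by agent `i`: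
`x` is vetoed via `L` precisely when the top of `L` differs from `x`. -/
def StrongVetoSet {n : ℕ} {X : Type*} [Fintype X] [Nonempty X]
    (f : Profile n X → X) (i : Fin n) : Set X :=
  {x | ∀ L : LinearOrder X, x ∉ OptionSet f i L ↔ top L ≠ x}

/-- `f` is dictatorial: some agent's top alternative is always selected. -/
def Dictatorial {n : ℕ} {X : Type*} [Fintype X] [Nonempty X]
    (f : Profile n X → X) : Prop :=
  ∃ i : Fin n, ∀ P : Profile n X, f P = top (P i)


section aux
variable {n : ℕ} {X : Type*} [Fintype X] [Nonempty X]

lemma le_top' (L : LinearOrder X) (x : X) : L.le x (top L) :=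
  @Finset.le_max' X L Finset.univ x (Finset.mem_univ x)

lemma top_eq' (L : LinearOrder X) (a : X) (h : ∀ x, L.le x a) : top L = a :=
  @le_antisymm X L.toPartialOrder _ _ (h _) (le_top' L a)

lemma optionSet_topsOnly (f : Profile n X → X) (htops : TopsOnly f) (i : Fin n)
    (L L' : LinearOrder X) (h : top L = top L') : OptionSet f i L = OptionSet f i L' := by
  have key : ∀ (A B : LinearOrder X), top A = top B → OptionSet f i A ⊆ OptionSet f i B := by
    rintro A B hAB x ⟨P, hPi, hfP⟩
    refine ⟨Function.update P i B, Function.update_self .., ?_⟩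
    rw [htops (Function.update P i B) P ?_]
    · exact hfP
    · intro j
      rcases eq_or_ne j i with rfl | hj
      · rw [Function.update_self, hPi, hAB]
      · rw [Function.update_of_ne hj]
  exact Set.Subset.antisymm (key L L' h) (key L' L h.symm)

/-- Key step: no worst-case obvious manipulations rules out best-case obvious ones. -/
lemma key_step (f : Profile n X → X) (honto : Function.Surjective f) (htops : TopsOnly f)
    (hW : ∀ (i : Fin n) (Li Li' : LinearOrder X),
        IsManip f i Li Li' → ¬ WorstImproves f i Li Li') :
    ∀ (i : Fin n) (Li Li' : LinearOrder X),
        IsManip f i Li Li' → ¬ BestImproves f i Li Li' := by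
  classical
  rintro i Li Li' _ ⟨b', hb'mem, hb'⟩
  set t := top Li with ht
  -- the top of Li is not in the option set of Li
  have htnot : t ∉ OptionSet f i Li := by
    intro htmem
    have h1 : Li.lt t b' := hb' t htmem
    have h2 : Li.le b' t := le_top' Li b'
    exact absurd (@lt_of_lt_of_le X Li.toPreorder _ _ _ h1 h2)
      (@lt_irrefl X Li.toPreorder t)
  -- by surjectivity, t is achieved at some profile
  obtain ⟨P0, hfP0⟩ := honto t
  set a := top (P0 i) with ha
  have hta : t ∈ OptionSet f i (P0 i) := ⟨P0, rfl, hfP0⟩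
  have hat : a ≠ t := by
    intro heq
    rw [optionSet_topsOnly f htops i (P0 i) Li (by rw [← ht, ← ha, heq])] at hta
    exact htnot hta
  -- build a preference R with top a and t at the very bottom
  set N := Fintype.card X with hN
  let e : X ≃ Fin N := Fintype.equivFin X
  let g : X → ℕ := fun x => if x = t then 0 else if x = a then N + 1 else (e x).val + 1
  have hgt : g t = 0 := by simp [g]
  have hga : g a = N + 1 := by simp [g, hat]
  have hgother : ∀ x, x ≠ t → x ≠ a → g x = (e x).val + 1 := by
    intro x h1 h2; simp [g, h1, h2]
  have hbound : ∀ x, x ≠ t → x ≠ a → 1 ≤ g x ∧ g x ≤ N := by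
    intro x h1 h2
    rw [hgother x h1 h2]
    have := (e x).isLt
    omega
  have hginj : Function.Injective g := by
    intro x y hxy
    by_cases hx : x = t <;> by_cases hy : y = t
    · rw [hx, hy]
    · exfalso
      by_cases hy2 : y = a
      · rw [hx, hgt, hy2, hga] at hxy; omega
      · have := hbound y hy hy2; rw [hx, hgt] at hxy; omega
    · exfalso
      by_cases hx2 : x = a
      · rw [hy, hgt, hx2, hga] at hxy; omega
      · have := hbound x hx hx2; rw [hy, hgt] at hxy; omega
    · by_cases hx2 : x = a <;> by_cases hy2 : y = a
      · rw [hx2, hy2]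
      · exfalso; have := hbound y hy hy2; rw [hx2, hga] at hxy; omega
      · exfalso; have := hbound x hx hx2; rw [hy2, hga] at hxy; omega
      · have h1 := hgother x hx hx2
        have h2 := hgother y hy hy2
        rw [h1, h2] at hxy
        have : e x = e y := Fin.ext (by omega)
        exact e.injective this
  set R : LinearOrder X := LinearOrder.lift' g hginj with hR
  have hRle : ∀ x y : X, R.le x y ↔ g x ≤ g y := fun _ _ => Iff.rfl
  have hRlt : ∀ x y : X, R.lt x y ↔ g x < g y := fun _ _ => Iff.rfl
  -- top of R is a
  have htopR : top R = a := by
    apply top_eq'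
    intro x
    rw [hRle, hga]
    by_cases h1 : x = t
    · rw [h1, hgt]; omega
    · by_cases h2 : x = a
      · rw [h2, hga]
      · have := hbound x h1 h2; omega
  -- option sets of R and P0 i coincide, so t ∈ O(R)
  have hOR : OptionSet f i R = OptionSet f i (P0 i) :=
    optionSet_topsOnly f htops i R (P0 i) (by rw [htopR, ha])
  have htR : t ∈ OptionSet f i R := by rw [hOR]; exact hta
  -- every element of O(Li) is strictly R-above t
  have hallabove : ∀ w' ∈ OptionSet f i Li, prefers R w' t := by
    intro w' hw'
    have hne : w' ≠ t := fun h => htnot (h ▸ hw')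
    show R.lt t w'
    rw [hRlt, hgt]
    by_cases h2 : w' = a
    · rw [h2, hga]; omega
    · have := hbound w' hne h2; omega
  -- hence Li is a worst-case obvious manipulation of f at R
  have hWI : WorstImproves f i R Li := ⟨t, htR, hallabove⟩
  have hIM : IsManip f i R Li := by
    refine ⟨Function.update P0 i R, Function.update_self .., ?_⟩
    have hfup : f (Function.update P0 i R) = t := by
      rw [htops (Function.update P0 i R) P0 ?_]
      · exact hfP0
      · intro j
        rcases eq_or_ne j i with rfl | hj
        · rw [Function.update_self, htopR, ha]
        · rw [Function.update_of_ne hj]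
    rw [hfup]
    apply hallabove
    exact ⟨Function.update (Function.update P0 i R) i Li, Function.update_self .., rfl⟩
  exact hW i R Li hIM hWI

end aux

/-- For an onto tops-only rule: if it admits no worst-case obvious manipulation then it
admits no best-case obvious manipulation; hence it is NOM iff it admits no worst-case
obvious manipulation. -/
theorem worstCase_suffices {n : ℕ} {X : Type*} [Fintype X] [Nonempty X]
    (f : Profile n X → X) (honto : Function.Surjective f) (htops : TopsOnly f) :
    ((∀ (i : Fin n) (Li Li' : LinearOrder X),
        IsManip f i Li Li' → ¬ WorstImproves f i Li Li') →
      ∀ (i : Fin n) (Li Li' : LinearOrder X),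
        IsManip f i Li Li' → ¬ BestImproves f i Li Li') ∧
    ((∀ (i : Fin n) (Li Li' : LinearOrder X),
        ¬ (IsManip f i Li Li' ∧ WorstImproves f i Li Li')) ↔ NOM f) := by
  constructor
  · exact key_step f honto htops
  · constructor
    · intro h i Li Li' ⟨hm, hor⟩
      rcases hor with hw | hb
      · exact h i Li Li' ⟨hm, hw⟩
      · exact key_step f honto htops (fun i L L' hm hw => h i L L' ⟨hm, hw⟩) i Li Li' hm hb
    · intro hnom i Li Li' ⟨hm, hw⟩
      exact hnom i Li Li' ⟨hm, Or.inl hw⟩
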